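/- For every positive integer n, the number of positive divisors of n satisfies d(n) ≤ (1536/35)^{1/3} · n^{1/3}. -/

import Mathlib

private lemma card_div_prime_pow {p : ℕ} (pp : p.Prime) (k : ℕ) :
    (p ^ k).divisors.card = k + 1 := by
  rw [Nat.divisors_prime_pow pp, Finset.card_map, Finset.card_range]

-- (a+1)^3 ≤ 8 * 2^a
private lemma aux2 : ∀ a : ℕ, (a + 1) ^ 3 ≤ 8 * 2 ^ a := by
  have key : ∀ k : ℕ, (k + 3 + 1) ^ 3 ≤ 8 * 2 ^ (k + 3) := by
    intro k
    induction k with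
    | zero => norm_num
    | succ k ih =>
      have h1 : (k + 4 + 1) ^ 3 ≤ 2 * (k + 3 + 1) ^ 3 := by
        have e : 2 * (k + 3 + 1) ^ 3 = (k + 4 + 1) ^ 3 + (k^3 + 9*k^2 + 21*k + 3) := by ring
        rw [e]; exact Nat.le_add_right _ _
      calc (k + 1 + 3 + 1) ^ 3 = (k + 4 + 1) ^ 3 := by ring_nf
        _ ≤ 2 * (k + 3 + 1) ^ 3 := h1
        _ ≤ 2 * (8 * 2 ^ (k + 3)) := Nat.mul_le_mul (le_refl 2) ih
        _ = 8 * 2 ^ (k + 1 + 3) := by ring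
  intro a
  match a with
  | 0 => norm_num
  | 1 => norm_num
  | 2 => norm_num
  | (k + 3) => exact key k

-- (b+1)^3 ≤ 3 * 3^b
private lemma aux3 : ∀ b : ℕ, (b + 1) ^ 3 ≤ 3 * 3 ^ b := by
  have key : ∀ k : ℕ, (k + 2 + 1) ^ 3 ≤ 3 * 3 ^ (k + 2) := by
    intro k
    induction k with
    | zero => norm_num
    | succ k ih =>
      have h1 : (k + 3 + 1) ^ 3 ≤ 3 * (k + 2 + 1) ^ 3 := by
        have e : 3 * (k + 2 + 1) ^ 3 = (k + 3 + 1) ^ 3 + (2*k^3 + 15*k^2 + 33*k + 17) := by ring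
        rw [e]; exact Nat.le_add_right _ _
      calc (k + 1 + 2 + 1) ^ 3 = (k + 3 + 1) ^ 3 := by ring_nf
        _ ≤ 3 * (k + 2 + 1) ^ 3 := h1
        _ ≤ 3 * (3 * 3 ^ (k + 2)) := Nat.mul_le_mul (le_refl 3) ih
        _ = 3 * 3 ^ (k + 1 + 2) := by ring
  intro b
  match b with
  | 0 => norm_num
  | 1 => norm_num
  | (k + 2) => exact key k

-- 5 * (c+1)^3 ≤ 8 * 5^c
private lemma aux5 : ∀ c : ℕ, 5 * (c + 1) ^ 3 ≤ 8 * 5 ^ c := by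
  have key : ∀ k : ℕ, 5 * (k + 1 + 1) ^ 3 ≤ 8 * 5 ^ (k + 1) := by
    intro k
    induction k with
    | zero => norm_num
    | succ k ih =>
      have h1 : 5 * (k + 2 + 1) ^ 3 ≤ 5 * (5 * (k + 1 + 1) ^ 3) := by
        have e : 5 * (5 * (k + 1 + 1) ^ 3) = 5 * (k + 2 + 1) ^ 3
            + 5 * (4*k^3 + 21*k^2 + 33*k + 13) := by ring
        rw [e]; exact Nat.le_add_right _ _
      calc 5 * (k + 1 + 1 + 1) ^ 3 = 5 * (k + 2 + 1) ^ 3 := by ring_nf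
        _ ≤ 5 * (5 * (k + 1 + 1) ^ 3) := h1
        _ ≤ 5 * (8 * 5 ^ (k + 1)) := Nat.mul_le_mul (le_refl 5) ih
        _ = 8 * 5 ^ (k + 1 + 1) := by ring
  intro c
  match c with
  | 0 => norm_num
  | (k + 1) => exact key k

-- 7 * (d+1)^3 ≤ 8 * 7^d
private lemma aux7 : ∀ d : ℕ, 7 * (d + 1) ^ 3 ≤ 8 * 7 ^ d := by
  have key : ∀ k : ℕ, 7 * (k + 1 + 1) ^ 3 ≤ 8 * 7 ^ (k + 1) := by
    intro k
    induction k with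
    | zero => norm_num
    | succ k ih =>
      have h1 : 7 * (k + 2 + 1) ^ 3 ≤ 7 * (7 * (k + 1 + 1) ^ 3) := by
        have e : 7 * (7 * (k + 1 + 1) ^ 3) = 7 * (k + 2 + 1) ^ 3
            + 7 * (6*k^3 + 33*k^2 + 57*k + 29) := by ring
        rw [e]; exact Nat.le_add_right _ _
      calc 7 * (k + 1 + 1 + 1) ^ 3 = 7 * (k + 2 + 1) ^ 3 := by ring_nf
        _ ≤ 7 * (7 * (k + 1 + 1) ^ 3) := h1
        _ ≤ 7 * (8 * 7 ^ (k + 1)) := Nat.mul_le_mul (le_refl 7) ih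
        _ = 8 * 7 ^ (k + 1 + 1) := by ring
  intro d
  match d with
  | 0 => norm_num
  | (k + 1) => exact key k

-- (k+1)^3 ≤ 11^k
private lemma aux11 : ∀ k : ℕ, (k + 1) ^ 3 ≤ 11 ^ k := by
  intro k
  induction k with
  | zero => norm_num
  | succ k ih =>
    have h1 : (k + 1 + 1) ^ 3 ≤ 8 * (k + 1) ^ 3 := by
      have e : 8 * (k + 1) ^ 3 = (k + 1 + 1) ^ 3 + (7*k^3 + 18*k^2 + 12*k) := by ring
      rw [e]; exact Nat.le_add_right _ _
    calc (k + 1 + 1) ^ 3 ≤ 8 * (k + 1) ^ 3 := h1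
      _ ≤ 8 * 11 ^ k := Nat.mul_le_mul (le_refl 8) ih
      _ ≤ 11 * 11 ^ k := Nat.mul_le_mul (by norm_num) (le_refl _)
      _ = 11 ^ (k + 1) := by ring

-- if all prime divisors of m are ≥ 11, then d(m)^3 ≤ m
private lemma large_primes_bound : ∀ m : ℕ, 0 < m →
    (∀ p : ℕ, p.Prime → p ∣ m → 11 ≤ p) → m.divisors.card ^ 3 ≤ m := by
  intro m
  induction m using Nat.recOnPrimePow with
  | zero => intro h; omega
  | one => intro _ _; simp
  | prime_pow_mul a p k pp hpa hk ih =>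
    intro hpos hdvd
    have ha : 0 < a := by
      rcases Nat.eq_zero_or_pos a with h | h
      · subst h; simp at hpos
      · exact h
    have hp11 : 11 ≤ p := hdvd p pp
      (dvd_mul_of_dvd_left (dvd_pow_self p hk.ne') a)
    have hcop : (p ^ k).Coprime a := Nat.Coprime.pow_left _
      ((Nat.Prime.coprime_iff_not_dvd pp).mpr hpa)
    rw [hcop.card_divisors_mul, card_div_prime_pow pp]
    have hbd : a.divisors.card ^ 3 ≤ a := ih ha fun q hq hqa =>
      hdvd q hq (hqa.mul_left _)
    have hk3 : (k + 1) ^ 3 ≤ p ^ k :=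
      le_trans (aux11 k) (Nat.pow_le_pow_left hp11 k)
    calc ((k + 1) * a.divisors.card) ^ 3
        = (k + 1) ^ 3 * a.divisors.card ^ 3 := by ring
      _ ≤ p ^ k * a := Nat.mul_le_mul hk3 hbd

-- main natural-number inequality
private lemma main_nat (n : ℕ) (hn : 0 < n) :
    35 * n.divisors.card ^ 3 ≤ 1536 * n := by
  have hn0 : n ≠ 0 := hn.ne'
  set a := n.factorization 2 with ha
  set n1 := n / 2 ^ a with hn1
  have h2 : n = 2 ^ a * n1 := (Nat.ordProj_mul_ordCompl_eq_self n 2).symm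
  have hn1pos : 0 < n1 := Nat.ordCompl_pos 2 hn0
  have hnd2 : ¬ (2 ∣ n1) := Nat.not_dvd_ordCompl Nat.prime_two hn0
  set b := n1.factorization 3 with hb
  set n2 := n1 / 3 ^ b with hn2
  have h3 : n1 = 3 ^ b * n2 := (Nat.ordProj_mul_ordCompl_eq_self n1 3).symm
  have hn2pos : 0 < n2 := Nat.ordCompl_pos 3 hn1pos.ne'
  have hnd3 : ¬ (3 ∣ n2) := Nat.not_dvd_ordCompl Nat.prime_three hn1pos.ne'
  set c := n2.factorization 5 with hc
  set n3 := n2 / 5 ^ c with hn3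
  have h5 : n2 = 5 ^ c * n3 := (Nat.ordProj_mul_ordCompl_eq_self n2 5).symm
  have hn3pos : 0 < n3 := Nat.ordCompl_pos 5 hn2pos.ne'
  have hnd5 : ¬ (5 ∣ n3) := Nat.not_dvd_ordCompl (by norm_num) hn2pos.ne'
  set d := n3.factorization 7 with hd
  set m := n3 / 7 ^ d with hm
  have h7 : n3 = 7 ^ d * m := (Nat.ordProj_mul_ordCompl_eq_self n3 7).symm
  have hmpos : 0 < m := Nat.ordCompl_pos 7 hn3pos.ne'
  have hnd7 : ¬ (7 ∣ m) := Nat.not_dvd_ordCompl (by norm_num) hn3pos.ne'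
  -- m has no prime divisors below 11
  have hm3 : m ∣ n3 := h7 ▸ dvd_mul_left m (7 ^ d)
  have hm2 : m ∣ n2 := hm3.trans (h5 ▸ dvd_mul_left n3 (5 ^ c))
  have hm1 : m ∣ n1 := hm2.trans (h3 ▸ dvd_mul_left n2 (3 ^ b))
  have hmd2 : ¬ (2 ∣ m) := fun h => hnd2 (h.trans hm1)
  have hmd3 : ¬ (3 ∣ m) := fun h => hnd3 (h.trans hm2)
  have hmd5 : ¬ (5 ∣ m) := fun h => hnd5 (h.trans hm3)
  have hlarge : ∀ p : ℕ, p.Prime → p ∣ m → 11 ≤ p := by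
    intro p pp hpm
    by_contra hlt
    push_neg at hlt
    have h2le := pp.two_le
    interval_cases p
    · exact hmd2 hpm
    · exact hmd3 hpm
    · exact absurd pp (by norm_num)
    · exact hmd5 hpm
    · exact absurd pp (by norm_num)
    · exact hnd7 hpm
    · exact absurd pp (by norm_num)
    · exact absurd pp (by norm_num)
    · exact absurd pp (by norm_num)
  have hmgood : m.divisors.card ^ 3 ≤ m := large_primes_bound m hmpos hlarge
  -- multiplicativity
  have cop2 : (2 ^ a).Coprime n1 := Nat.Coprime.pow_left _
    ((Nat.Prime.coprime_iff_not_dvd Nat.prime_two).mpr hnd2)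
  have cop3 : (3 ^ b).Coprime n2 := Nat.Coprime.pow_left _
    ((Nat.Prime.coprime_iff_not_dvd Nat.prime_three).mpr hnd3)
  have cop5 : (5 ^ c).Coprime n3 := Nat.Coprime.pow_left _
    ((Nat.Prime.coprime_iff_not_dvd (by norm_num)).mpr hnd5)
  have cop7 : (7 ^ d).Coprime m := Nat.Coprime.pow_left _
    ((Nat.Prime.coprime_iff_not_dvd (by norm_num)).mpr hnd7)
  have hcard : n.divisors.card
      = (a + 1) * ((b + 1) * ((c + 1) * ((d + 1) * m.divisors.card))) := by
    rw [h2, cop2.card_divisors_mul, card_div_prime_pow Nat.prime_two,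
      h3, cop3.card_divisors_mul, card_div_prime_pow Nat.prime_three,
      h5, cop5.card_divisors_mul, card_div_prime_pow (by norm_num),
      h7, cop7.card_divisors_mul, card_div_prime_pow (by norm_num)]
  rw [hcard, h2, h3, h5, h7]
  have key : 35 * ((a + 1) * ((b + 1) * ((c + 1) * ((d + 1) * m.divisors.card)))) ^ 3
      = ((a + 1) ^ 3) * ((b + 1) ^ 3) * (5 * (c + 1) ^ 3) * (7 * (d + 1) ^ 3)
        * m.divisors.card ^ 3 := by ring
  rw [key]
  have goal : (8 * 2 ^ a) * (3 * 3 ^ b) * (8 * 5 ^ c) * (8 * 7 ^ d) * m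
      = 1536 * (2 ^ a * (3 ^ b * (5 ^ c * (7 ^ d * m)))) := by ring
  rw [← goal]
  exact Nat.mul_le_mul (Nat.mul_le_mul (Nat.mul_le_mul
    (Nat.mul_le_mul (aux2 a) (aux3 b)) (aux5 c)) (aux7 d)) hmgood

/-- For every positive integer `n`, the number of positive divisors of `n`
satisfies `d(n) ≤ (1536/35)^(1/3) · n^(1/3)`. -/
theorem stmt8 (n : ℕ) (hn : 0 < n) :
    (n.divisors.card : ℝ) ≤ (1536 / 35 : ℝ) ^ ((1 : ℝ) / 3) * (n : ℝ) ^ ((1 : ℝ) / 3) := by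
  have hnat := main_nat n hn
  set D : ℝ := (n.divisors.card : ℝ) with hD
  have hDnn : 0 ≤ D := by positivity
  have hreal : D ^ (3 : ℕ) ≤ (1536 / 35 : ℝ) * n := by
    have : (35 : ℝ) * D ^ (3 : ℕ) ≤ 1536 * n := by
      have := hnat
      push_cast [hD]
      exact_mod_cast Nat.cast_le.mpr hnat
    linarith
  have h1 : D = (D ^ (3 : ℕ)) ^ ((1 : ℝ) / 3) := by
    rw [← Real.rpow_natCast D 3, ← Real.rpow_mul hDnn]
    norm_num
  rw [h1, ← Real.mul_rpow (by norm_num) (by positivity)]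
  exact Real.rpow_le_rpow (pow_nonneg hDnn 3) hreal (by norm_num)
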